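/- Let q > 0 and let b₁, b₂ satisfy b₁ + b₂ = 2 and 0 < b₂ < 1 < b₁ < 2. Define h(x) = [x^q·((2−x)^q/b₂^q − 1)] / [(2−x)^q·(1 − x^q/b₁^q)] for x ∈ (0, b₁). Then h(x) tends to (b₁/b₂)^{q+1} as x tends to b₁ from the left; in particular this one-sided limit is strictly greater than 1. -/

import Mathlib

open Filter Topology

/-- The auxiliary function `h` from the proof of the paper's Theorem 1 tends to
`(b₁/b₂)^{q+1}` as `x → b₁⁻`, and this one-sided limit is strictly greater than `1`. -/
theorem mmpde_aux_limit_at_b₁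
    (q b₁ b₂ : ℝ) (hq : 0 < q)
    (hbsum : b₁ + b₂ = 2) (hb₂0 : 0 < b₂) (hb₂1 : b₂ < 1) (hb₁1 : 1 < b₁) (hb₁2 : b₁ < 2)
    (h : ℝ → ℝ)
    (hdef : ∀ x : ℝ, h x =
      x ^ q * ((2 - x) ^ q / b₂ ^ q - 1) / ((2 - x) ^ q * (1 - x ^ q / b₁ ^ q))) :
    Tendsto h (𝓝[<] b₁) (𝓝 ((b₁ / b₂) ^ (q + 1))) ∧ 1 < (b₁ / b₂) ^ (q + 1) := by
  have hb₁0 : (0:ℝ) < b₁ := by linarith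
  have hb₂eq : 2 - b₁ = b₂ := by linarith
  have hb₁qpos : 0 < b₁ ^ q := Real.rpow_pos_of_pos hb₁0 q
  have hb₂qpos : 0 < b₂ ^ q := Real.rpow_pos_of_pos hb₂0 q
  set f : ℝ → ℝ := fun x => (2 - x) ^ q with hf
  set g : ℝ → ℝ := fun x => x ^ q with hg
  -- derivatives at b₁
  have hinner : HasDerivAt (fun x : ℝ => 2 - x) (-1) b₁ := (hasDerivAt_id b₁).const_sub 2
  have hrpow : HasDerivAt (fun y : ℝ => y ^ q) (q * b₂ ^ (q - 1)) (2 - b₁) := by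
    rw [hb₂eq]
    exact Real.hasDerivAt_rpow_const (Or.inl (ne_of_gt hb₂0))
  have hfd : HasDerivAt f (q * b₂ ^ (q - 1) * (-1)) b₁ := hrpow.comp b₁ hinner
  have hgd : HasDerivAt g (q * b₁ ^ (q - 1)) b₁ :=
    Real.hasDerivAt_rpow_const (Or.inl (ne_of_gt hb₁0))
  have hsub : 𝓝[<] b₁ ≤ 𝓝[≠] b₁ :=
    nhdsWithin_mono b₁ (fun x hx => ne_of_lt hx)
  have hslopef : Tendsto (slope f b₁) (𝓝[<] b₁) (𝓝 (q * b₂ ^ (q - 1) * (-1))) :=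
    (hasDerivAt_iff_tendsto_slope.mp hfd).mono_left hsub
  have hslopeg : Tendsto (slope g b₁) (𝓝[<] b₁) (𝓝 (q * b₁ ^ (q - 1))) :=
    (hasDerivAt_iff_tendsto_slope.mp hgd).mono_left hsub
  have hgne : -(q * b₁ ^ (q - 1)) ≠ 0 := by
    have := Real.rpow_pos_of_pos hb₁0 (q - 1)
    nlinarith
  have T2 : Tendsto (fun x => slope f b₁ x / (-(slope g b₁ x))) (𝓝[<] b₁)
      (𝓝 ((q * b₂ ^ (q - 1) * (-1)) / (-(q * b₁ ^ (q - 1))))) :=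
    hslopef.div hslopeg.neg hgne
  -- continuous factor
  have hratio : Tendsto (fun x : ℝ => x / (2 - x)) (𝓝[<] b₁) (𝓝 (b₁ / b₂)) := by
    have : ContinuousAt (fun x : ℝ => x / (2 - x)) b₁ := by
      apply ContinuousAt.div continuousAt_id (by fun_prop)
      rw [hb₂eq]; exact ne_of_gt hb₂0
    have := this.continuousWithinAt (s := Set.Iio b₁)
    simpa [hb₂eq] using this.tendsto
  have T1 : Tendsto (fun x : ℝ => (x / (2 - x)) ^ q * (b₁ ^ q / b₂ ^ q)) (𝓝[<] b₁)
      (𝓝 ((b₁ / b₂) ^ q * (b₁ ^ q / b₂ ^ q))) := by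
    have hpos : 0 < b₁ / b₂ := div_pos hb₁0 hb₂0
    exact (hratio.rpow_const (Or.inl (ne_of_gt hpos))).mul_const _
  have T : Tendsto (fun x : ℝ => ((x / (2 - x)) ^ q * (b₁ ^ q / b₂ ^ q)) *
      (slope f b₁ x / (-(slope g b₁ x)))) (𝓝[<] b₁)
      (𝓝 (((b₁ / b₂) ^ q * (b₁ ^ q / b₂ ^ q)) *
        ((q * b₂ ^ (q - 1) * (-1)) / (-(q * b₁ ^ (q - 1)))))) := T1.mul T2
  -- identify limit value
  have hval : ((b₁ / b₂) ^ q * (b₁ ^ q / b₂ ^ q)) *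
      ((q * b₂ ^ (q - 1) * (-1)) / (-(q * b₁ ^ (q - 1)))) = (b₁ / b₂) ^ (q + 1) := by
    rw [Real.div_rpow (le_of_lt hb₁0) (le_of_lt hb₂0),
        Real.div_rpow (le_of_lt hb₁0) (le_of_lt hb₂0),
        Real.rpow_add hb₁0, Real.rpow_add hb₂0, Real.rpow_one, Real.rpow_one,
        show q - 1 = q + (-1) by ring, Real.rpow_add hb₁0, Real.rpow_add hb₂0,
        Real.rpow_neg_one, Real.rpow_neg_one]
    field_simp
  rw [hval] at T
  constructor
  · refine T.congr' ?_
    filter_upwards [Ioo_mem_nhdsLT_of_mem (by constructor <;> linarith : b₁ ∈ Set.Ioc 1 b₁)]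
      with x hx
    obtain ⟨hx1, hxb⟩ := hx
    have hx0 : (0:ℝ) < x := by linarith
    have h2x : (0:ℝ) < 2 - x := by linarith
    have hxqpos : 0 < x ^ q := Real.rpow_pos_of_pos hx0 q
    have h2xqpos : 0 < (2 - x) ^ q := Real.rpow_pos_of_pos h2x q
    have hxne : x - b₁ ≠ 0 := by intro hc; linarith [sub_eq_zero.mp hc]
    have hdr : (x / (2 - x)) ^ q = x ^ q / (2 - x) ^ q :=
      Real.div_rpow (le_of_lt hx0) (le_of_lt h2x) q
    rw [hdef x, slope_def_field, slope_def_field, hf, hg]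
    simp only [hb₂eq]
    rw [hdr]
    field_simp
    rw [show b₁ ^ q - x ^ q = -(x ^ q - b₁ ^ q) by ring, div_neg]
  · rw [Real.one_lt_rpow_iff_of_pos (div_pos hb₁0 hb₂0)]
    left
    constructor
    · rw [lt_div_iff₀ hb₂0]; linarith
    · linarith
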